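/- The invariant derivations ∇₁ = x D_x + y D_y and ∇₂ = u_x D_y − u_y D_x satisfy the commutator relation [∇₁, ∇₂] = (I_{2b}/I₁)∇₁ + ((I_{2a} − I₁)/I₁)∇₂ as derivations on jet space, where I₁ = x u_x + y u_y, I_{2a} = x²u_{xx} + 2xy u_{xy} + y²u_{yy}, I_{2b} = x u_y u_{xx} − y u_x u_{yy} + (y u_y − x u_x)u_{xy}. -/
import Mathlib


open Matrix

noncomputable section

/-- Coordinates on `J²ℝ²`: `(x, y, u, u_x, u_y, u_xx, u_xy, u_yy)`. -/
def Dx (F : (Fin 8 → ℝ) → ℝ) : (Fin 8 → ℝ) → ℝ := fun p =>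
  fderiv ℝ F p ![1, 0, p 3, p 5, p 6, 0, 0, 0]

def Dy (F : (Fin 8 → ℝ) → ℝ) : (Fin 8 → ℝ) → ℝ := fun p =>
  fderiv ℝ F p ![0, 1, p 4, p 6, p 7, 0, 0, 0]

/-- `∇₁ = x D_x + y D_y`. -/
def Nabla1 (F : (Fin 8 → ℝ) → ℝ) : (Fin 8 → ℝ) → ℝ := fun p =>
  p 0 * Dx F p + p 1 * Dy F p

/-- `∇₂ = u_x D_y − u_y D_x`. -/
def Nabla2 (F : (Fin 8 → ℝ) → ℝ) : (Fin 8 → ℝ) → ℝ := fun p =>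
  p 3 * Dy F p - p 4 * Dx F p

/-- `D_x`-coefficient of `∇₁` -/
def a1 : (Fin 8 → ℝ) → ℝ := fun p => p 0
/-- `D_y`-coefficient of `∇₁` -/
def b1 : (Fin 8 → ℝ) → ℝ := fun p => p 1
/-- `D_x`-coefficient of `∇₂` -/
def a2 : (Fin 8 → ℝ) → ℝ := fun p => -(p 4)
/-- `D_y`-coefficient of `∇₂` -/
def b2 : (Fin 8 → ℝ) → ℝ := fun p => p 3

def I1 : (Fin 8 → ℝ) → ℝ := fun p => p 0 * p 3 + p 1 * p 4

def I2a : (Fin 8 → ℝ) → ℝ := fun p =>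
  (p 0) ^ 2 * p 5 + 2 * p 0 * p 1 * p 6 + (p 1) ^ 2 * p 7

def I2b : (Fin 8 → ℝ) → ℝ := fun p =>
  p 0 * p 4 * p 5 - p 1 * p 3 * p 7 + (p 1 * p 4 - p 0 * p 3) * p 6

lemma fd_proj (i : Fin 8) (p v : Fin 8 → ℝ) :
    fderiv ℝ (fun q : Fin 8 → ℝ => q i) p v = v i := by
  rw [show (fun q : Fin 8 → ℝ => q i) = (ContinuousLinearMap.proj i : (Fin 8 → ℝ) →L[ℝ] ℝ) from rfl,
    ContinuousLinearMap.fderiv]; rfl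

lemma fd_negproj (i : Fin 8) (p v : Fin 8 → ℝ) :
    fderiv ℝ (fun q : Fin 8 → ℝ => -(q i)) p v = -(v i) := by
  rw [show (fun q : Fin 8 → ℝ => -(q i)) = (-(ContinuousLinearMap.proj i : (Fin 8 → ℝ) →L[ℝ] ℝ) : _) from rfl,
    ContinuousLinearMap.fderiv]; rfl

lemma fd_a1 (p v : Fin 8 → ℝ) : fderiv ℝ a1 p v = v 0 := fd_proj 0 p v
lemma fd_b1 (p v : Fin 8 → ℝ) : fderiv ℝ b1 p v = v 1 := fd_proj 1 p v
lemma fd_a2 (p v : Fin 8 → ℝ) : fderiv ℝ a2 p v = -(v 4) := fd_negproj 4 p v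
lemma fd_b2 (p v : Fin 8 → ℝ) : fderiv ℝ b2 p v = v 3 := fd_proj 3 p v


/-- `I₁·[∇₁,∇₂] = I_{2b}·∇₁ + (I_{2a} − I₁)·∇₂`, componentwise in the
coefficients of `D_x` and `D_y`, where
`[∇₁,∇₂] = (∇₁(a₂) − ∇₂(a₁))D_x + (∇₁(b₂) − ∇₂(b₁))D_y`. -/
theorem stmt_4 : ∀ p : Fin 8 → ℝ,
    I1 p * (Nabla1 a2 p - Nabla2 a1 p) = I2b p * a1 p + (I2a p - I1 p) * a2 p ∧
    I1 p * (Nabla1 b2 p - Nabla2 b1 p) = I2b p * b1 p + (I2a p - I1 p) * b2 p := by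
  intro p
  constructor <;>
  · simp only [Nabla1, Nabla2, Dx, Dy, a1, a2, b1, b2, I1, I2a, I2b, fd_a1, fd_b1, fd_a2, fd_b2]
    simp [Matrix.cons_val_zero, Matrix.cons_val_one]
    ring
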